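/- Let K_0 := {(u,v,a) ∈ ℝ³ : u² + v² = 1} \ {(0,1,0)}. Then the loops γ, γ̃ : 𝕊¹ → K_0 given by γ(θ) = (cos θ, sin θ, 1) and γ̃(θ) = (cos θ, sin θ, −1) are NOT freely homotopic in K_0, i.e., they are not homotopic as continuous maps from the circle 𝕊¹ to K_0. -/

import Mathlib

set_option maxHeartbeats 1000000

open Real

lemma transfer_log {c c' : ℝ → ℂ} (hc : Continuous c) (hc' : Continuous c')
    (hne : ∀ θ, c θ ≠ 0)
    (hclose : ∀ θ, ‖c' θ - c θ‖ < ‖c θ‖)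
    (hper : ∀ θ, c (θ + 2 * π) = c θ) (hper' : ∀ θ, c' (θ + 2 * π) = c' θ)
    {L : ℝ → ℂ} (hL : Continuous L) (hLc : ∀ θ, Complex.exp (L θ) = c θ) :
    ∃ L' : ℝ → ℂ, Continuous L' ∧ (∀ θ, Complex.exp (L' θ) = c' θ) ∧
      L' (2 * π) - L' 0 = L (2 * π) - L 0 := by
  set q : ℝ → ℂ := fun θ => c' θ / c θ with hq
  have hq_slit : ∀ θ, q θ ∈ Complex.slitPlane := by
    intro θ
    rw [Complex.mem_slitPlane_iff]
    left
    have h1 : ‖q θ - 1‖ < 1 := by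
      have he : q θ - 1 = (c' θ - c θ) / c θ := by
        rw [hq, sub_div, div_self (hne θ)]
      rw [he, norm_div, div_lt_one (norm_pos_iff.mpr (hne θ))]
      exact hclose θ
    have h2 : |(q θ - 1).re| < 1 :=
      lt_of_le_of_lt (Complex.abs_re_le_norm _) h1
    have h3 : (q θ - 1).re = (q θ).re - 1 := by simp
    have := (abs_lt.mp h2).1
    linarith
  have hq_ne : ∀ θ, q θ ≠ 0 := fun θ => Complex.slitPlane_ne_zero (hq_slit θ)
  have hq_cont : Continuous q := hc'.div hc hne
  refine ⟨fun θ => L θ + Complex.log (q θ), ?_, ?_, ?_⟩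
  · refine hL.add ?_
    refine continuous_iff_continuousAt.mpr fun θ => ?_
    exact (continuousAt_clog (hq_slit θ)).comp hq_cont.continuousAt
  · intro θ
    rw [Complex.exp_add, Complex.exp_log (hq_ne θ), hLc θ, hq]
    field_simp [hne θ]
  · have hq2 : q (2 * π) = q 0 := by
      simp only [hq]
      rw [show (2:ℝ) * π = 0 + 2 * π by ring, hper, hper']
    show L (2 * π) + Complex.log (q (2 * π)) - (L 0 + Complex.log (q 0)) = _
    rw [hq2]
    ring

/-- Transport a continuous logarithm (with its winding increment) along a
homotopy of nonvanishing `2π`-periodic loops. -/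
lemma chain_log {h : ℝ → ℝ → ℂ} (hcont : Continuous fun p : ℝ × ℝ => h p.1 p.2)
    (hne : ∀ t θ, h t θ ≠ 0) (hper : ∀ t θ, h t (θ + 2 * π) = h t θ)
    {L₀ : ℝ → ℂ} (hL₀ : Continuous L₀) (hlift : ∀ θ, Complex.exp (L₀ θ) = h 0 θ) :
    ∃ L : ℝ → ℂ, Continuous L ∧ (∀ θ, Complex.exp (L θ) = h 1 θ) ∧
      L (2 * π) - L 0 = L₀ (2 * π) - L₀ 0 := by
  have hcont_t : ∀ t : ℝ, Continuous (h t) := fun t =>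
    hcont.comp (Continuous.prodMk_right t)
  set S : Set ℝ := {t | ∃ L : ℝ → ℂ, Continuous L ∧ (∀ θ, Complex.exp (L θ) = h t θ) ∧
      L (2 * π) - L 0 = L₀ (2 * π) - L₀ 0} with hS
  have key : ∀ t : ℝ, ∃ V ∈ nhds t, ∀ s ∈ V, (s ∈ S ↔ t ∈ S) := by
    intro t
    have hUopen : IsOpen {p : ℝ × ℝ | ‖h p.1 p.2 - h t p.2‖ < ‖h t p.2‖ ∧
        ‖h p.1 p.2 - h t p.2‖ < ‖h p.1 p.2‖} := by
      have c1 : Continuous fun p : ℝ × ℝ => ‖h p.1 p.2 - h t p.2‖ :=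
        (hcont.sub ((hcont_t t).comp continuous_snd)).norm
      have c2 : Continuous fun p : ℝ × ℝ => ‖h t p.2‖ :=
        ((hcont_t t).comp continuous_snd).norm
      have c3 : Continuous fun p : ℝ × ℝ => ‖h p.1 p.2‖ := hcont.norm
      exact (isOpen_lt c1 c2).inter (isOpen_lt c1 c3)
    have hsub : ({t} : Set ℝ) ×ˢ Set.Icc (0:ℝ) (2 * π) ⊆
        {p : ℝ × ℝ | ‖h p.1 p.2 - h t p.2‖ < ‖h t p.2‖ ∧
          ‖h p.1 p.2 - h t p.2‖ < ‖h p.1 p.2‖} := by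
      rintro ⟨s, θ⟩ ⟨hs, -⟩
      simp only [Set.mem_singleton_iff] at hs
      subst hs
      constructor <;>
        · show ‖h s θ - h s θ‖ < _
          rw [sub_self, norm_zero]
          exact norm_pos_iff.mpr (hne _ _)
    obtain ⟨u, v, huo, hvo, htu, hIv, huv⟩ :=
      generalized_tube_lemma isCompact_singleton isCompact_Icc hUopen hsub
    refine ⟨u, huo.mem_nhds (htu rfl), fun s hs => ?_⟩
    have hclose : ∀ θ : ℝ, ‖h s θ - h t θ‖ < ‖h t θ‖ ∧ ‖h s θ - h t θ‖ < ‖h s θ‖ := by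
      have hperP : Function.Periodic
          (fun θ : ℝ => ‖h s θ - h t θ‖ < ‖h t θ‖ ∧ ‖h s θ - h t θ‖ < ‖h s θ‖) (2 * π) := by
        intro θ
        simp only [hper]
      intro θ
      obtain ⟨y, hy, hyeq⟩ := hperP.exists_mem_Ico₀ Real.two_pi_pos θ
      have hyU : (s, y) ∈ {p : ℝ × ℝ | ‖h p.1 p.2 - h t p.2‖ < ‖h t p.2‖ ∧
          ‖h p.1 p.2 - h t p.2‖ < ‖h p.1 p.2‖} :=
        huv ⟨hs, hIv (Set.mem_Icc_of_Ico hy)⟩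
      have h2 : ‖h s y - h t y‖ < ‖h t y‖ ∧ ‖h s y - h t y‖ < ‖h s y‖ := hyU
      exact cast hyeq.symm h2
    constructor
    · rintro ⟨L, hL, hLh, hLd⟩
      obtain ⟨L', hL', hL'h, hL'd⟩ := transfer_log (hcont_t s) (hcont_t t) (hne s)
        (fun θ => by
          have h2 := (hclose θ).2
          rwa [show h t θ - h s θ = -(h s θ - h t θ) by ring, norm_neg])
        (hper s) (hper t) hL hLh
      exact ⟨L', hL', hL'h, by rw [hL'd, hLd]⟩
    · rintro ⟨L, hL, hLh, hLd⟩
      obtain ⟨L', hL', hL'h, hL'd⟩ := transfer_log (hcont_t t) (hcont_t s) (hne t)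
        (fun θ => (hclose θ).1) (hper t) (hper s) hL hLh
      exact ⟨L', hL', hL'h, by rw [hL'd, hLd]⟩
  have hSopen : IsOpen S := by
    rw [isOpen_iff_mem_nhds]
    intro t ht
    obtain ⟨V, hV, hVS⟩ := key t
    exact Filter.mem_of_superset hV (fun s hs => (hVS s hs).mpr ht)
  have hScopen : IsOpen Sᶜ := by
    rw [isOpen_iff_mem_nhds]
    intro t ht
    obtain ⟨V, hV, hVS⟩ := key t
    exact Filter.mem_of_superset hV (fun s hs hsS => ht ((hVS s hs).mp hsS))
  have hclopen : IsClopen S := ⟨⟨hScopen⟩, hSopen⟩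
  have h0 : (0:ℝ) ∈ S := ⟨L₀, hL₀, hlift, rfl⟩
  have huniv : S = Set.univ := hclopen.eq_univ ⟨0, h0⟩
  have h1 : (1:ℝ) ∈ S := huniv ▸ Set.mem_univ 1
  exact h1

/-- A continuous lift of a constant loop has zero winding increment. -/
lemma const_loop_lift {L : ℝ → ℂ} (hL : Continuous L)
    (hconst : ∀ θ, Complex.exp (L θ) = Complex.exp (L 0)) :
    L (2 * π) = L 0 := by
  have hint : ∀ θ, ∃ n : ℤ, L θ - L 0 = n * (2 * π * Complex.I) := by
    intro θ
    rw [← Complex.exp_eq_one_iff, Complex.exp_sub, hconst θ, div_self (Complex.exp_ne_zero _)]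
  set u : ℝ → ℝ := fun θ => (L θ - L 0).im with hu
  have hucont : Continuous u := Complex.continuous_im.comp (hL.sub continuous_const)
  have hu0 : u 0 = 0 := by simp [hu]
  have huint : ∀ θ, ∃ n : ℤ, u θ = 2 * π * n := by
    intro θ
    obtain ⟨n, hn⟩ := hint θ
    refine ⟨n, ?_⟩
    rw [hu]
    simp only [hn, Complex.mul_im]
    simp
    ring
  have hu2 : u (2 * π) = 0 := by
    by_contra hne
    rcases lt_or_gt_of_ne hne with hneg | hpos
    · have hv : max (-π) (u (2 * π)) ∈ Set.Icc (u (2 * π)) (u 0) := by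
        refine ⟨le_max_right _ _, ?_⟩
        rw [hu0]
        exact max_le (by linarith [Real.pi_pos]) (le_of_lt hneg)
      obtain ⟨θ, -, hθ⟩ := intermediate_value_Icc' (by positivity : (0:ℝ) ≤ 2 * π)
        hucont.continuousOn hv
      obtain ⟨n, hn⟩ := huint θ
      rw [hθ] at hn
      have hvneg : max (-π) (u (2 * π)) < 0 := max_lt (by linarith [Real.pi_pos]) hneg
      have hvge : -π ≤ max (-π) (u (2 * π)) := le_max_left _ _
      have hn1 : (n : ℝ) < 0 := by nlinarith [Real.pi_pos]
      have hn1' : n < 0 := by exact_mod_cast hn1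
      have hn2 : (n : ℝ) ≤ -1 := by exact_mod_cast (by omega : n ≤ -1)
      nlinarith [Real.pi_pos]
    · have hv : min π (u (2 * π)) ∈ Set.Icc (u 0) (u (2 * π)) := by
        refine ⟨?_, min_le_right _ _⟩
        rw [hu0]
        exact le_min (le_of_lt Real.pi_pos) (le_of_lt hpos)
      obtain ⟨θ, -, hθ⟩ := intermediate_value_Icc (by positivity : (0:ℝ) ≤ 2 * π)
        hucont.continuousOn hv
      obtain ⟨n, hn⟩ := huint θ
      rw [hθ] at hn
      have hvpos : 0 < min π (u (2 * π)) := lt_min Real.pi_pos hpos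
      have hvle : min π (u (2 * π)) ≤ π := min_le_left _ _
      have hn1 : (0 : ℝ) < n := by nlinarith [Real.pi_pos]
      have hn1' : 0 < n := by exact_mod_cast hn1
      have hn2 : (1 : ℝ) ≤ n := by exact_mod_cast (by omega : 1 ≤ n)
      nlinarith [Real.pi_pos]
  obtain ⟨n, hn⟩ := hint (2 * π)
  have him : u (2 * π) = 2 * π * n := by
    rw [hu]
    simp only [hn, Complex.mul_im]
    simp
    ring
  have hn0 : (n : ℝ) = 0 := by
    rw [hu2] at him
    have hpi := Real.pi_ne_zero
    have : 2 * π * (n:ℝ) = 0 := him.symm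
    rcases mul_eq_zero.mp this with h2 | h3
    · rcases mul_eq_zero.mp h2 with h4 | h5
      · norm_num at h4
      · exact absurd h5 hpi
    · exact h3
  have hzero : L (2 * π) - L 0 = 0 := by
    rw [hn]
    have : (n : ℂ) = 0 := by exact_mod_cast hn0
    rw [this]
    ring
  exact sub_eq_zero.mp hzero

/-- For `K_0 = {(u,v,a) : u² + v² = 1} \ {(0,1,0)}`, the loops
`γ(θ) = (cos θ, sin θ, 1)` and `γ̃(θ) = (cos θ, sin θ, −1)` are NOT freely homotopic
in `K_0`: there is no homotopy between them taking values in `K_0`. -/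
theorem stmt_9 (K : Set (ℝ × ℝ × ℝ))
    (hK : K = {p : ℝ × ℝ × ℝ | p.1 ^ 2 + p.2.1 ^ 2 = 1} \ {((0 : ℝ), (1 : ℝ), (0 : ℝ))})
    (γ γ' : C(Circle, ℝ × ℝ × ℝ))
    (hγ : ∀ w : Circle, γ w = ((w : ℂ).re, (w : ℂ).im, 1))
    (hγ' : ∀ w : Circle, γ' w = ((w : ℂ).re, (w : ℂ).im, -1)) :
    ¬ ∃ H : ContinuousMap.Homotopy γ γ', ∀ p : unitInterval × Circle, H p ∈ K := by
  rintro ⟨H, hH⟩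
  -- the separating function `g : K → ℂ \ {0}`
  set g : ℝ × ℝ × ℝ → ℂ := fun p =>
    Complex.exp (p.2.2 : ℂ) * ((p.1 : ℂ) + (p.2.1 : ℂ) * Complex.I) - Complex.I with hg
  have hg_cont : Continuous g := by fun_prop
  have hg_ne : ∀ p : ℝ × ℝ × ℝ, p ∈ K → g p ≠ 0 := by
    rintro ⟨u, v, a⟩ hp hg0
    rw [hK] at hp
    obtain ⟨hcirc, hnot⟩ := hp
    simp only [Set.mem_setOf_eq] at hcirc
    have heq : Complex.exp (a : ℂ) * ((u : ℂ) + (v : ℂ) * Complex.I) = Complex.I := by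
      have := sub_eq_zero.mp hg0
      exact this
    have habs : Real.exp a * Real.sqrt (u ^ 2 + v ^ 2) = 1 := by
      have h1 := congrArg norm heq
      rwa [norm_mul, Complex.norm_exp, Complex.ofReal_re, Complex.norm_add_mul_I,
        Complex.norm_I] at h1
    rw [hcirc, Real.sqrt_one, mul_one] at habs
    have ha0 : a = 0 := by simpa using habs
    rw [ha0] at heq
    simp only [Complex.ofReal_zero, Complex.exp_zero, one_mul] at heq
    have hu : u = 0 := by
      have := congrArg Complex.re heq
      simpa using this
    have hv : v = 1 := by
      have := congrArg Complex.im heq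
      simpa using this
    exact hnot (by simp [hu, hv, ha0])
  -- clamping
  set σ : ℝ → ℝ := fun t => max 0 (min 1 t) with hσ
  have hσc : Continuous σ := continuous_const.max (continuous_const.min continuous_id)
  have hσ0 : ∀ t, 0 ≤ σ t := fun t => le_max_left _ _
  have hσ1 : ∀ t, σ t ≤ 1 := fun t => max_le (by norm_num) (min_le_left _ _)
  have hσa : σ 0 = 0 := by norm_num [hσ]
  have hσb : σ 1 = 1 := by norm_num [hσ]
  -- stage 1 : from the round loop `exp(1+iθ)` to `exp(1+iθ) - i`
  set h₁ : ℝ → ℝ → ℂ := fun t θ =>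
    Complex.exp (1 + (θ : ℂ) * Complex.I) - (σ t : ℂ) * Complex.I with hh₁
  have h₁cont : Continuous fun p : ℝ × ℝ => h₁ p.1 p.2 := by
    apply Continuous.sub
    · exact Complex.continuous_exp.comp (by fun_prop)
    · fun_prop
  have hnorm_exp : ∀ θ : ℝ, ‖Complex.exp (1 + (θ : ℂ) * Complex.I)‖ = Real.exp 1 := by
    intro θ
    rw [Complex.norm_exp]
    norm_num
  have h₁ne : ∀ t θ, h₁ t θ ≠ 0 := by
    intro t θ
    have hb : ‖(σ t : ℂ) * Complex.I‖ ≤ 1 := by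
      rw [norm_mul, Complex.norm_I, mul_one, Complex.norm_real, Real.norm_eq_abs,
        abs_of_nonneg (hσ0 t)]
      exact hσ1 t
    have hlb := norm_sub_norm_le (Complex.exp (1 + (θ : ℂ) * Complex.I)) ((σ t : ℂ) * Complex.I)
    rw [hnorm_exp θ] at hlb
    have he2 : (2 : ℝ) ≤ Real.exp 1 := by
      have := Real.add_one_le_exp 1
      linarith
    intro h0
    rw [hh₁] at h0
    simp only [h0, norm_zero] at hlb
    linarith
  have h₁per : ∀ t θ, h₁ t (θ + 2 * π) = h₁ t θ := by
    intro t θ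
    simp only [hh₁]
    rw [show (1:ℂ) + ((θ + 2*π : ℝ) : ℂ) * Complex.I
        = (1 + (θ:ℂ) * Complex.I) + 2 * (π:ℂ) * Complex.I by push_cast; ring,
      Complex.exp_add, Complex.exp_two_pi_mul_I, mul_one]
  -- initial explicit logarithm
  set L₀ : ℝ → ℂ := fun θ => 1 + (θ : ℂ) * Complex.I with hL₀def
  have hL₀c : Continuous L₀ := by fun_prop
  have hL₀lift : ∀ θ, Complex.exp (L₀ θ) = h₁ 0 θ := by
    intro θ
    simp [hh₁, hL₀def, hσa]
  obtain ⟨L₁, hL₁c, hL₁lift, hL₁Δ⟩ := chain_log h₁cont h₁ne h₁per hL₀c hL₀lift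
  -- stage 2 : along the homotopy H
  set h₂ : ℝ → ℝ → ℂ := fun t θ =>
    g (H (Set.projIcc (0:ℝ) 1 zero_le_one t, Circle.exp θ)) with hh₂
  have h₂cont : Continuous fun p : ℝ × ℝ => h₂ p.1 p.2 := by
    apply hg_cont.comp
    apply H.continuous.comp
    exact ((continuous_projIcc.comp continuous_fst).prodMk
      (Circle.exp.continuous.comp continuous_snd))
  have h₂ne : ∀ t θ, h₂ t θ ≠ 0 := fun t θ => hg_ne _ (hH _)
  have h₂per : ∀ t θ, h₂ t (θ + 2 * π) = h₂ t θ := by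
    intro t θ
    simp only [hh₂, Circle.periodic_exp θ]
  have h₂0 : ∀ θ, h₂ 0 θ = h₁ 1 θ := by
    intro θ
    simp only [hh₂, hh₁]
    rw [Set.projIcc_left]
    have h0 : H ((⟨0, Set.left_mem_Icc.mpr zero_le_one⟩ : unitInterval), Circle.exp θ)
        = γ (Circle.exp θ) := H.apply_zero _
    rw [h0, hγ]
    simp only [hg]
    rw [Complex.re_add_im]
    rw [show ((Circle.exp θ : ℂ)) = Complex.exp ((θ:ℂ) * Complex.I) from Circle.coe_exp θ]
    rw [← Complex.exp_add, hσb]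
    norm_num
  have hL₁lift' : ∀ θ, Complex.exp (L₁ θ) = h₂ 0 θ := by
    intro θ
    rw [h₂0 θ, hL₁lift θ]
  obtain ⟨L₂, hL₂c, hL₂lift, hL₂Δ⟩ := chain_log h₂cont h₂ne h₂per hL₁c hL₁lift'
  -- stage 3 : contract the small loop to the constant `-i`
  set h₃ : ℝ → ℝ → ℂ := fun t θ =>
    (1 - (σ t : ℂ)) * Complex.exp (-1 + (θ : ℂ) * Complex.I) - Complex.I with hh₃
  have h₃cont : Continuous fun p : ℝ × ℝ => h₃ p.1 p.2 := by
    apply Continuous.sub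
    · apply Continuous.mul
      · fun_prop
      · exact Complex.continuous_exp.comp (by fun_prop)
    · exact continuous_const
  have h₃ne : ∀ t θ, h₃ t θ ≠ 0 := by
    intro t θ
    have hb : ‖(1 - (σ t : ℂ)) * Complex.exp (-1 + (θ:ℂ) * Complex.I)‖ ≤ Real.exp (-1) := by
      rw [norm_mul]
      have hne : ‖Complex.exp (-1 + (θ:ℂ) * Complex.I)‖ = Real.exp (-1) := by
        rw [Complex.norm_exp]
        norm_num
      rw [hne]
      have h1 : ‖(1 - (σ t : ℂ))‖ ≤ 1 := by
        rw [show (1 - (σ t : ℂ)) = ((1 - σ t : ℝ) : ℂ) by push_cast; ring,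
          Complex.norm_real, Real.norm_eq_abs, abs_of_nonneg (by linarith [hσ1 t])]
        linarith [hσ0 t]
      nlinarith [Real.exp_pos (-1 : ℝ)]
    have hlb := norm_sub_norm_le (Complex.I)
      ((1 - (σ t : ℂ)) * Complex.exp (-1 + (θ:ℂ) * Complex.I))
    rw [Complex.norm_I] at hlb
    have hexplt : Real.exp (-1) < 1 := by
      rw [show (1:ℝ) = Real.exp 0 by rw [Real.exp_zero]]
      exact Real.exp_lt_exp.mpr (by norm_num)
    intro h0
    have h0' : Complex.I - (1 - (σ t : ℂ)) * Complex.exp (-1 + (θ:ℂ) * Complex.I) = -(h₃ t θ) := by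
      simp only [hh₃]
      ring
    rw [h0', h0, neg_zero, norm_zero] at hlb
    linarith
  have h₃per : ∀ t θ, h₃ t (θ + 2 * π) = h₃ t θ := by
    intro t θ
    simp only [hh₃]
    rw [show (-1:ℂ) + ((θ + 2*π : ℝ) : ℂ) * Complex.I
        = (-1 + (θ:ℂ) * Complex.I) + 2 * (π:ℂ) * Complex.I by push_cast; ring,
      Complex.exp_add, Complex.exp_two_pi_mul_I, mul_one]
  have h₃0 : ∀ θ, h₃ 0 θ = h₂ 1 θ := by
    intro θ
    simp only [hh₃, hh₂]
    rw [Set.projIcc_right]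
    have h1 : H ((⟨1, Set.right_mem_Icc.mpr zero_le_one⟩ : unitInterval), Circle.exp θ)
        = γ' (Circle.exp θ) := H.apply_one _
    rw [h1, hγ']
    simp only [hg]
    rw [Complex.re_add_im]
    rw [show ((Circle.exp θ : ℂ)) = Complex.exp ((θ:ℂ) * Complex.I) from Circle.coe_exp θ]
    rw [← Complex.exp_add, hσa]
    norm_num
  have hL₂lift' : ∀ θ, Complex.exp (L₂ θ) = h₃ 0 θ := by
    intro θ
    rw [h₃0 θ, hL₂lift θ]
  obtain ⟨L₃, hL₃c, hL₃lift, hL₃Δ⟩ := chain_log h₃cont h₃ne h₃per hL₂c hL₂lift'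
  -- the final loop is constant, so its lift has zero winding increment
  have hconstval : ∀ θ, h₃ 1 θ = -Complex.I := by
    intro θ
    simp only [hh₃, hσb]
    push_cast
    ring
  have hconst : ∀ θ, Complex.exp (L₃ θ) = Complex.exp (L₃ 0) := by
    intro θ
    rw [hL₃lift θ, hL₃lift 0, hconstval θ, hconstval 0]
  have hzero : L₃ (2 * π) - L₃ 0 = 0 := by
    rw [const_loop_lift hL₃c hconst]
    ring
  -- but the winding increment was `2πi`
  have hΔ : L₃ (2 * π) - L₃ 0 = 2 * (π:ℂ) * Complex.I := by
    rw [hL₃Δ, hL₂Δ, hL₁Δ, hL₀def]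
    push_cast
    ring
  rw [hzero] at hΔ
  have : (2 * (π:ℂ) * Complex.I).im = 0 := by rw [← hΔ]; simp
  simp [Complex.mul_im] at this
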